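/- Let (G, F) be an inverse sequence of twinned graph homomorphisms, with inverse limit vertex set V_G and relations E_G, E_F, where E_F is an equivalence relation on V_G. Let Y = V_G / E_F carry the quotient topology and let π : V_G → Y be the quotient map. Then Y is a compact Hausdorff space and there exists a unique continuous map T : Y → Y such that T(π(x)) = π(y) whenever (x, y) ∈ E_G; that is, (Y, T) is a dynamical system. -/

import Mathlib

/-- An inverse sequence of twinned graph homomorphisms `(𝒢, ℱ)`: graphs
`G_i = (V i, EG i)` and `F_i = (V i, EF i)` on the same finite vertex sets, sharing
connecting maps `φ i : V (i+1) → V i`, satisfying conditions (DS0)–(DS3b). -/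
structure TwinnedSeq : Type 1 where
  V : ℕ → Type
  fintype : ∀ i, Fintype (V i)
  EG : ∀ i, V i → V i → Prop
  EF : ∀ i, V i → V i → Prop
  φ : ∀ i, V (i + 1) → V i
  /-- (DS0) `G_0` has exactly one vertex. -/
  ds0_nonempty : Nonempty (V 0)
  ds0_subsingleton : ∀ v w : V 0, v = w
  /-- (DS1) each `φ i` is an edge-surjective graph homomorphism for `𝒢`, and every
  vertex of every `G_i` has an outgoing edge. -/
  ds1_hom : ∀ i, ∀ u v : V (i + 1), EG (i + 1) u v → EG i (φ i u) (φ i v)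
  ds1_edge_surj : ∀ i, ∀ u v : V i, EG i u v →
    ∃ a b : V (i + 1), EG (i + 1) a b ∧ φ i a = u ∧ φ i b = v
  ds1_out : ∀ i, ∀ v : V i, ∃ w, EG i v w
  /-- (DS2) each `φ i` is a graph homomorphism for `ℱ`, each `EF i` is symmetric and
  reflexive. -/
  ds2_hom : ∀ i, ∀ u v : V (i + 1), EF (i + 1) u v → EF i (φ i u) (φ i v)
  ds2_symm : ∀ i, ∀ u v : V i, EF i u v → EF i v u
  ds2_refl : ∀ i, ∀ v : V i, EF i v v
  /-- (DS3) -/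
  ds3 : ∀ i, ∀ a b a' b' : V (i + 1),
    EF (i + 1) a b → EG (i + 1) a a' → EG (i + 1) b b' → EF i (φ i a') (φ i b')
  /-- (DS3b) -/
  ds3b : ∀ i, ∀ a b c : V (i + 1), EF (i + 1) a b → EF (i + 1) b c → EF i (φ i a) (φ i c)

/-- The inverse limit vertex set `V_G`. -/
def TwLimit (S : TwinnedSeq) : Type :=
  {x : ∀ i, S.V i // ∀ i, x i = S.φ i (x (i + 1))}

/-- `V_G` as a subspace of the product of the discrete (finite) spaces `V i`. -/
instance (S : TwinnedSeq) : TopologicalSpace (TwLimit S) :=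
  letI : ∀ i, TopologicalSpace (S.V i) := fun _ => ⊥
  inferInstanceAs (TopologicalSpace {x : ∀ i, S.V i // ∀ i, x i = S.φ i (x (i + 1))})

/-- The inverse limit relation `E_G`. -/
def limEG (S : TwinnedSeq) (x y : TwLimit S) : Prop :=
  ∀ i, S.EG i (x.1 i) (y.1 i)

/-- The inverse limit relation `E_F`. -/
def limEF (S : TwinnedSeq) (x y : TwLimit S) : Prop :=
  ∀ i, S.EF i (x.1 i) (y.1 i)

/-! ### Auxiliary material -/

section Aux

open CategoryTheory

variable {S : TwinnedSeq}

instance (S : TwinnedSeq) (i : ℕ) : TopologicalSpace (S.V i) := ⊥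
instance (S : TwinnedSeq) (i : ℕ) : DiscreteTopology (S.V i) := ⟨rfl⟩
instance (S : TwinnedSeq) (i : ℕ) : Fintype (S.V i) := S.fintype i

/-- `limEF` is an equivalence relation. -/
theorem limEF_equivalence (S : TwinnedSeq) : Equivalence (limEF S) := by
  constructor
  · exact fun x i => S.ds2_refl i _
  · exact fun h i => S.ds2_symm i _ _ (h i)
  · intro x y z hxy hyz i
    have := S.ds3b i (x.1 (i + 1)) (y.1 (i + 1)) (z.1 (i + 1)) (hxy (i + 1)) (hyz (i + 1))
    rwa [← x.2 i, ← z.2 i] at this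

theorem limEF_of_mk_eq {x y : TwLimit S}
    (h : Quot.mk (limEF S) x = Quot.mk (limEF S) y) : limEF S x y :=
  (limEF_equivalence S).eqvGen_iff.mp (Quot.eqvGen_exact h)

/-- Pushing forward along `E_G` respects `E_F` (from DS3). -/
theorem limEF_push {x x' y y' : TwLimit S} (hxx : limEF S x x')
    (hy : limEG S x y) (hy' : limEG S x' y') : limEF S y y' := by
  intro i
  have := S.ds3 i (x.1 (i + 1)) (x'.1 (i + 1)) (y.1 (i + 1)) (y'.1 (i + 1))
    (hxx (i + 1)) (hy (i + 1)) (hy' (i + 1))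
  rwa [← y.2 i, ← y'.2 i] at this

theorem isClosed_twLimit (S : TwinnedSeq) :
    IsClosed {x : ∀ i, S.V i | ∀ i, x i = S.φ i (x (i + 1))} := by
  have : {x : ∀ i, S.V i | ∀ i, x i = S.φ i (x (i + 1))} =
      ⋂ i, {x : ∀ i, S.V i | x i = S.φ i (x (i + 1))} := by
    ext x; simp [Set.mem_iInter]
  rw [this]
  exact isClosed_iInter fun i =>
    isClosed_eq (continuous_apply i)
      ((continuous_of_discreteTopology (f := S.φ i)).comp (continuous_apply (i + 1)))

instance (S : TwinnedSeq) : CompactSpace (TwLimit S) :=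
  isCompact_iff_compactSpace.mp (isClosed_twLimit S).isCompact

instance (S : TwinnedSeq) : T2Space (TwLimit S) :=
  inferInstanceAs (T2Space {x : ∀ i, S.V i // ∀ i, x i = S.φ i (x (i + 1))})

theorem continuous_coord (S : TwinnedSeq) (i : ℕ) :
    Continuous fun x : TwLimit S => x.1 i :=
  (continuous_apply i).comp
    (continuous_subtype_val (p := fun x : ∀ i, S.V i => ∀ i, x i = S.φ i (x (i + 1))))

/-- Inverse-limit relations defined level-wise are closed. -/
theorem isClosed_rel (S : TwinnedSeq) (R : ∀ i, S.V i → S.V i → Prop) :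
    IsClosed {p : TwLimit S × TwLimit S | ∀ i, R i (p.1.1 i) (p.2.1 i)} := by
  have : {p : TwLimit S × TwLimit S | ∀ i, R i (p.1.1 i) (p.2.1 i)} =
      ⋂ i, (fun p : TwLimit S × TwLimit S => (p.1.1 i, p.2.1 i)) ⁻¹'
        {q : S.V i × S.V i | R i q.1 q.2} := by
    ext p; simp [Set.mem_iInter]
  rw [this]
  exact isClosed_iInter fun i =>
    (isClosed_discrete _).preimage
      (((continuous_coord S i).comp continuous_fst).prodMk
        ((continuous_coord S i).comp continuous_snd))

/-- König-type lemma: a levelwise-nonempty `φ`-invariant system of sets admits a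
section in the inverse limit. -/
theorem exists_section (S : TwinnedSeq) (D : ∀ n, Set (S.V n))
    (hne : ∀ n, (D n).Nonempty) (hmap : ∀ n, ∀ v ∈ D (n + 1), S.φ n v ∈ D n) :
    ∃ y : TwLimit S, ∀ n, y.1 n ∈ D n := by
  let f : ∀ n, (D (n + 1) : Type) ⟶ (D n : Type) :=
    fun n => TypeCat.ofHom fun v => ⟨S.φ n v.1, hmap n v.1 v.2⟩
  let F : ℕᵒᵖ ⥤ Type := Functor.ofOpSequence (X := fun n => (D n : Type)) f
  haveI : ∀ j : ℕᵒᵖ, Finite (F.obj j) := fun j => by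
    show Finite (D j.unop); infer_instance
  haveI : ∀ j : ℕᵒᵖ, Nonempty (F.obj j) := fun j => by
    show Nonempty (D j.unop); exact (hne j.unop).to_subtype
  obtain ⟨u, hu⟩ := nonempty_sections_of_finite_inverse_system F
  refine ⟨⟨fun n => (u ⟨n⟩).1, fun n => ?_⟩, fun n => (u ⟨n⟩).2⟩
  have h1 := hu (j := ⟨n + 1⟩) (j' := ⟨n⟩) (homOfLE (Nat.le_add_right n 1)).op
  rw [show F.map (homOfLE (Nat.le_add_right n 1)).op = f n from
    Functor.ofOpSequence_map_homOfLE_succ (X := fun n => (D n : Type)) f n] at h1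
  exact congrArg Subtype.val h1.symm

/-- Every point has an outgoing `E_G`-successor in the inverse limit. -/
theorem limEG_total (S : TwinnedSeq) (x : TwLimit S) : ∃ y, limEG S x y := by
  obtain ⟨y, hy⟩ := exists_section S (fun n => {v | S.EG n (x.1 n) v})
    (fun n => S.ds1_out n (x.1 n))
    (fun n v hv => by
      have := S.ds1_hom n (x.1 (n + 1)) v hv
      rwa [← x.2 n] at this)
  exact ⟨y, hy⟩

/-- Saturation of a closed set under `limEF` is closed. -/
theorem isClosed_sat (S : TwinnedSeq) {A : Set (TwLimit S)} (hA : IsClosed A) :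
    IsClosed {x : TwLimit S | ∃ a ∈ A, limEF S x a} := by
  have : {x : TwLimit S | ∃ a ∈ A, limEF S x a} =
      Prod.fst '' ({p : TwLimit S × TwLimit S | ∀ i, S.EF i (p.1.1 i) (p.2.1 i)} ∩
        Set.univ ×ˢ A) := by
    ext x
    constructor
    · rintro ⟨a, ha, h⟩; exact ⟨(x, a), ⟨h, Set.mem_univ _, ha⟩, rfl⟩
    · rintro ⟨⟨x', a⟩, ⟨h, -, ha⟩, rfl⟩; exact ⟨a, ha, h⟩
  rw [this]
  exact (((isClosed_rel S S.EF).inter (isClosed_univ.prod hA)).isCompact.image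
    continuous_fst).isClosed

theorem sat_preimage (S : TwinnedSeq) (A : Set (TwLimit S)) :
    Quot.mk (limEF S) ⁻¹' (Quot.mk (limEF S) '' A) =
      {x : TwLimit S | ∃ a ∈ A, limEF S x a} := by
  ext x
  constructor
  · rintro ⟨a, ha, h⟩
    exact ⟨a, ha, limEF_of_mk_eq h.symm⟩
  · rintro ⟨a, ha, h⟩
    exact ⟨a, ha, (Quot.sound h).symm⟩

end Aux

/-- The quotient space `Y = V_G / E_F` with the quotient topology is compact
Hausdorff, and there is a unique continuous map `T : Y → Y` with `T(π x) = π y`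
whenever `(x, y) ∈ E_G`; that is, `(Y, T)` is a dynamical system. -/
theorem quotient_system (S : TwinnedSeq) :
    CompactSpace (Quot (limEF S)) ∧ T2Space (Quot (limEF S)) ∧
      ∃! T : Quot (limEF S) → Quot (limEF S), Continuous T ∧
        ∀ x y : TwLimit S, limEG S x y →
          T (Quot.mk (limEF S) x) = Quot.mk (limEF S) y := by
  have heqv := limEF_equivalence S
  set r := limEF S with hr
  set π := Quot.mk r with hπ
  -- Y is compact
  have hcompact : CompactSpace (Quot r) := by
    constructor
    have : (Set.univ : Set (Quot r)) = π '' Set.univ := by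
      ext q; refine ⟨fun _ => ?_, fun _ => trivial⟩
      obtain ⟨x, rfl⟩ := Quot.exists_rep q
      exact ⟨x, trivial, rfl⟩
    rw [this]
    exact isCompact_univ.image continuous_quot_mk
  refine ⟨hcompact, ?_, ?_⟩
  · -- Hausdorff
    constructor
    intro a b hab
    obtain ⟨x, rfl⟩ := Quot.exists_rep a
    obtain ⟨y, rfl⟩ := Quot.exists_rep b
    -- the classes of x and y are disjoint closed sets
    have hclassclosed : ∀ z : TwLimit S, IsClosed {w : TwLimit S | limEF S z w} := by
      intro z
      have : {w : TwLimit S | limEF S z w} =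
          (fun w : TwLimit S => (z, w)) ⁻¹'
            {p : TwLimit S × TwLimit S | ∀ i, S.EF i (p.1.1 i) (p.2.1 i)} := rfl
      rw [this]
      exact (isClosed_rel S S.EF).preimage (Continuous.prodMk_right z)
    have hdisj : Disjoint {w : TwLimit S | limEF S x w} {w : TwLimit S | limEF S y w} := by
      rw [Set.disjoint_left]
      intro w hxw hyw
      exact hab (Quot.sound (heqv.trans hxw (heqv.symm hyw)))
    obtain ⟨U, Vo, hU, hV, hxU, hyV, hUV⟩ :=
      normal_separation (hclassclosed x) (hclassclosed y) hdisj
    -- shrink to saturated open sets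
    set U' := {w : TwLimit S | ∃ a ∈ Uᶜ, limEF S w a}ᶜ with hU'
    set V' := {w : TwLimit S | ∃ a ∈ Voᶜ, limEF S w a}ᶜ with hV'
    have hU'open : IsOpen U' := (isClosed_sat S hU.isClosed_compl).isOpen_compl
    have hV'open : IsOpen V' := (isClosed_sat S hV.isClosed_compl).isOpen_compl
    have hU'sub : U' ⊆ U := by
      intro w hw
      by_contra hwu
      exact hw ⟨w, hwu, heqv.refl w⟩
    have hV'sub : V' ⊆ Vo := by
      intro w hw
      by_contra hwv
      exact hw ⟨w, hwv, heqv.refl w⟩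
    have hU'sat : ∀ w w', limEF S w w' → w ∈ U' → w' ∈ U' := by
      intro w w' hww hw hw'
      obtain ⟨a, ha, haw⟩ := hw'
      exact hw ⟨a, ha, heqv.trans hww haw⟩
    have hV'sat : ∀ w w', limEF S w w' → w ∈ V' → w' ∈ V' := by
      intro w w' hww hw hw'
      obtain ⟨a, ha, haw⟩ := hw'
      exact hw ⟨a, ha, heqv.trans hww haw⟩
    have hxU' : x ∈ U' := by
      rintro ⟨a, ha, hxa⟩
      exact ha (hxU hxa)
    have hyV' : y ∈ V' := by
      rintro ⟨a, ha, hya⟩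
      exact ha (hyV hya)
    refine ⟨π '' U', π '' V', ?_, ?_, ⟨x, hxU', rfl⟩, ⟨y, hyV', rfl⟩, ?_⟩
    · rw [isOpen_coinduced (f := Quot.mk r)]
      have : π ⁻¹' (π '' U') = U' := by
        rw [hπ, sat_preimage S U']
        ext w
        exact ⟨fun ⟨a, ha, hwa⟩ => hU'sat a w (heqv.symm hwa) ha,
          fun hw => ⟨w, hw, heqv.refl w⟩⟩
      rw [show Quot.mk r ⁻¹' (π '' U') = U' from this]
      exact hU'open
    · rw [isOpen_coinduced (f := Quot.mk r)]
      have : π ⁻¹' (π '' V') = V' := by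
        rw [hπ, sat_preimage S V']
        ext w
        exact ⟨fun ⟨a, ha, hwa⟩ => hV'sat a w (heqv.symm hwa) ha,
          fun hw => ⟨w, hw, heqv.refl w⟩⟩
      rw [show Quot.mk r ⁻¹' (π '' V') = V' from this]
      exact hV'open
    · rw [Set.disjoint_left]
      rintro q ⟨u, hu, rfl⟩ ⟨v, hv, hvq⟩
      have huv : limEF S v u := limEF_of_mk_eq hvq
      have : u ∈ Vo := hV'sub (hV'sat v u huv hv)
      exact Set.disjoint_left.mp hUV (hU'sub hu) this
  · -- the dynamical system map
    have total := limEG_total S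
    choose g hg using total
    have hwd : ∀ x x', r x x' → π (g x) = π (g x') := fun x x' h =>
      Quot.sound (limEF_push h (hg x) (hg x'))
    refine ⟨Quot.lift (fun x => π (g x)) hwd, ⟨?_, ?_⟩, ?_⟩
    · -- continuity
      apply continuous_quot_lift
      rw [continuous_def]
      intro O hO
      -- the preimage
      have key : (fun x => π (g x)) ⁻¹' O =
          {x : TwLimit S | ∃ a ∈ (π ⁻¹' O)ᶜ, limEG S x a}ᶜ := by
        ext x
        simp only [Set.mem_preimage, Set.mem_compl_iff, Set.mem_setOf_eq]
        constructor
        · rintro hx ⟨a, ha, hxa⟩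
          apply ha
          have : π (g x) = π a := Quot.sound (limEF_push (heqv.refl x) (hg x) hxa)
          rwa [← this]
        · intro h
          by_contra hgx
          exact h ⟨g x, hgx, hg x⟩
      rw [key]
      have hclosed : IsClosed {x : TwLimit S | ∃ a ∈ (π ⁻¹' O)ᶜ, limEG S x a} := by
        have heq : {x : TwLimit S | ∃ a ∈ (π ⁻¹' O)ᶜ, limEG S x a} =
            Prod.fst '' ({p : TwLimit S × TwLimit S | ∀ i, S.EG i (p.1.1 i) (p.2.1 i)} ∩
              Set.univ ×ˢ (π ⁻¹' O)ᶜ) := by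
          ext x
          constructor
          · rintro ⟨a, ha, h⟩; exact ⟨(x, a), ⟨h, Set.mem_univ _, ha⟩, rfl⟩
          · rintro ⟨⟨x', a⟩, ⟨h, -, ha⟩, rfl⟩; exact ⟨a, ha, h⟩
        rw [heq]
        exact (((isClosed_rel S S.EG).inter
          (isClosed_univ.prod (hO.preimage continuous_quot_mk).isClosed_compl)).isCompact.image
            continuous_fst).isClosed
      exact hclosed.isOpen_compl
    · -- defining property
      intro x y hxy
      exact Quot.sound (limEF_push (heqv.refl x) (hg x) hxy)
    · -- uniqueness
      rintro T' ⟨-, hT'⟩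
      funext q
      obtain ⟨x, rfl⟩ := Quot.exists_rep q
      exact (hT' x (g x) (hg x)).trans (Quot.sound (limEF_push (heqv.refl x) (hg x) (hg x))).symm
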